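/- If T is a subidentity (T ⊆ 1_σ), then sequential composition fully distributes over parallel composition on the right: (R‖S) · T = (R·T)‖(S·T) for all multirelations R, S. -/
import Mathlib


open Set

/-- Sequential composition of multirelations (Peleg). -/
def mseq {X : Type*} (R S : Set (X × Set X)) : Set (X × Set X) :=
  {p | ∃ B, (p.1, B) ∈ R ∧ ∃ f : X → Set X, (∀ b ∈ B, (b, f b) ∈ S) ∧ p.2 = ⋃ b ∈ B, f b}

/-- The unit of sequential composition. -/
def sunit (X : Type*) : Set (X × Set X) := {p | p.2 = {p.1}}

/-- Parallel (concurrent) composition of multirelations. -/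
def mpar {X : Type*} (R S : Set (X × Set X)) : Set (X × Set X) :=
  {p | ∃ A B, (p.1, A) ∈ R ∧ (p.1, B) ∈ S ∧ p.2 = A ∪ B}

/-- The unit of parallel composition. -/
def punit (X : Type*) : Set (X × Set X) := {p | p.2 = (∅ : Set X)}

/-- Domain of a multirelation. -/
def mdom {X : Type*} (R : Set (X × Set X)) : Set (X × Set X) :=
  {p | p.2 = {p.1} ∧ ∃ A, (p.1, A) ∈ R}

/-- Antidomain of a multirelation. -/
def mantidom {X : Type*} (R : Set (X × Set X)) : Set (X × Set X) :=
  {p | p.2 = {p.1} ∧ ¬ ∃ A, (p.1, A) ∈ R}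

/-- Diamond operator. -/
def mdia {X : Type*} (R P : Set (X × Set X)) : Set (X × Set X) := mdom (mseq R P)

theorem stmt9 {X : Type*} (R S T : Set (X × Set X)) (hT : T ⊆ sunit X) :
    mseq (mpar R S) T = mpar (mseq R T) (mseq S T) := by
  have key : ∀ b C, (b, C) ∈ T → C = {b} := fun b C h => hT h
  classical
  ext ⟨a, Z⟩
  constructor
  · rintro ⟨U, ⟨A, B, hA, hB, rfl⟩, f, hf, rfl⟩
    refine ⟨⋃ b ∈ A, f b, ⋃ b ∈ B, f b, ⟨A, hA, f, fun b hb => hf b (Or.inl hb), rfl⟩,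
      ⟨B, hB, f, fun b hb => hf b (Or.inr hb), rfl⟩, ?_⟩
    ext x; simp only [Set.mem_iUnion, Set.mem_union]; aesop
  · rintro ⟨A', B', ⟨A, hA, f, hf, rfl⟩, ⟨B, hB, g, hg, rfl⟩, rfl⟩
    have hfA : ∀ b ∈ A, f b = {b} := fun b hb => key b (f b) (hf b hb)
    have hgB : ∀ b ∈ B, g b = {b} := fun b hb => key b (g b) (hg b hb)
    refine ⟨A ∪ B, ⟨A, B, hA, hB, rfl⟩, fun b => if b ∈ A then f b else g b, ?_, ?_⟩
    · intro b hb
      by_cases h : b ∈ A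
      · simpa [h] using hf b h
      · simp only [h, if_false]
        exact hg b (hb.resolve_left h)
    · show (⋃ b ∈ A, f b) ∪ ⋃ b ∈ B, g b = _
      ext x
      simp only [Set.mem_iUnion, Set.mem_union]
      constructor
      · rintro (⟨b, hb, hx⟩ | ⟨b, hb, hx⟩)
        · exact ⟨b, Or.inl hb, by simp [hb, hx]⟩
        · by_cases h : b ∈ A
          · rw [hgB b hb] at hx
            exact ⟨b, Or.inl h, by simp [h, hfA b h, hx]⟩
          · exact ⟨b, Or.inr hb, by simp [h, hx]⟩
      · rintro ⟨b, hb | hb, hx⟩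
        · exact Or.inl ⟨b, hb, by simpa [hb] using hx⟩
        · by_cases h : b ∈ A
          · rw [if_pos h, hfA b h] at hx
            exact Or.inr ⟨b, hb, by rw [hgB b hb]; exact hx⟩
          · exact Or.inr ⟨b, hb, by simpa [h] using hx⟩
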